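/- If (d; m_1, ..., m_r) is a homaloidal type (i.e., integers satisfying the Noether equalities ∑ m_i = 3(d-1) and ∑ m_i² = d² - 1) with d ≥ 2 and m_1 ≥ m_2 ≥ ... ≥ m_r ≥ 0, then m_1 + m_2 + m_3 ≥ d + 1. -/

import Mathlib

/-- Noether's inequality: if `(d; m_1, ..., m_r)` is a homaloidal type with `d ≥ 2`
and `m_1 ≥ m_2 ≥ ... ≥ m_r ≥ 0`, then `m_1 + m_2 + m_3 ≥ d + 1`.
The multiplicities are indexed from `0`, padded by `0` beyond `r`. -/
theorem noether_inequality (r : ℕ) (d : ℤ) (m : ℕ → ℤ)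
    (hd : 2 ≤ d)
    (hmono : ∀ i j : ℕ, i ≤ j → m j ≤ m i)
    (hnonneg : ∀ i, 0 ≤ m i)
    (hzero : ∀ i, r ≤ i → m i = 0)
    (h1 : ∑ i ∈ Finset.range r, m i = 3 * (d - 1))
    (h2 : ∑ i ∈ Finset.range r, (m i) ^ 2 = d ^ 2 - 1) :
    d + 1 ≤ m 0 + m 1 + m 2 := by
  by_contra hcon
  push_neg at hcon
  set N := max r 3 with hN
  have hrN : r ≤ N := le_max_left _ _
  have h3N : 3 ≤ N := le_max_right _ _
  -- extend sums from range r to range N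
  have hsum1 : ∑ i ∈ Finset.range N, m i = 3 * (d - 1) := by
    rw [← h1]
    exact (Finset.sum_subset (Finset.range_subset_range.2 hrN)
      (fun i _ hi => hzero i (by simpa using hi))).symm
  have hsum2 : ∑ i ∈ Finset.range N, (m i) ^ 2 = d ^ 2 - 1 := by
    rw [← h2]
    exact (Finset.sum_subset (Finset.range_subset_range.2 hrN)
      (fun i _ hi => by rw [hzero i (by simpa using hi)]; ring)).symm
  -- split off the first three terms
  have hsplit1 : m 0 + m 1 + m 2 + ∑ i ∈ Finset.Ico 3 N, m i = 3 * (d - 1) := by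
    rw [← hsum1, Finset.range_eq_Ico, ← Finset.sum_Ico_consecutive m (Nat.zero_le 3) h3N]
    norm_num [Finset.sum_Ico_eq_sum_range, Finset.sum_range_succ]
  have hsplit2 : (m 0) ^ 2 + (m 1) ^ 2 + (m 2) ^ 2 + ∑ i ∈ Finset.Ico 3 N, (m i) ^ 2
      = d ^ 2 - 1 := by
    rw [← hsum2, Finset.range_eq_Ico,
      ← Finset.sum_Ico_consecutive (fun i => (m i) ^ 2) (Nat.zero_le 3) h3N]
    norm_num [Finset.sum_Ico_eq_sum_range, Finset.sum_range_succ]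
  set a := m 0 with ha
  set b := m 1 with hb
  set c := m 2 with hc
  have hab : b ≤ a := hmono 0 1 (by norm_num)
  have hbc : c ≤ b := hmono 1 2 (by norm_num)
  have hc0 : 0 ≤ c := hnonneg 2
  -- tail sums
  set S1 : ℤ := ∑ i ∈ Finset.Ico 3 N, m i with hS1def
  set S2 : ℤ := ∑ i ∈ Finset.Ico 3 N, (m i) ^ 2 with hS2def
  have hS1n : 0 ≤ S1 := Finset.sum_nonneg fun i _ => hnonneg i
  have hS2n : 0 ≤ S2 := Finset.sum_nonneg fun i _ => sq_nonneg _
  have hkey : S2 ≤ c * S1 := by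
    rw [hS2def, hS1def, Finset.mul_sum]
    apply Finset.sum_le_sum
    intro i hi
    have h2i : (2 : ℕ) ≤ i := by
      have := (Finset.mem_Ico.1 hi).1; omega
    have hmi : m i ≤ c := hmono 2 i h2i
    have := mul_le_mul_of_nonneg_right hmi (hnonneg i)
    nlinarith [hnonneg i]
  -- a ≤ d - 1
  have had : a ≤ d - 1 := by
    nlinarith [sq_nonneg b, sq_nonneg c, hnonneg 0, hsplit2, hS2n]
  -- b ≥ 1
  have hb1 : 1 ≤ b := by
    by_contra hb0
    push_neg at hb0
    have hb0' : b = 0 := le_antisymm (by omega) (hnonneg 1)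
    have hzero' : ∀ i, 1 ≤ i → m i = 0 := fun i hi =>
      le_antisymm (hb0' ▸ hmono 1 i hi) (hnonneg i)
    have hS10 : S1 = 0 := Finset.sum_eq_zero fun i hi =>
      hzero' i (by have := (Finset.mem_Ico.1 hi).1; omega)
    have hS20 : S2 = 0 := Finset.sum_eq_zero fun i hi => by
      rw [hzero' i (by have := (Finset.mem_Ico.1 hi).1; omega)]; ring
    have hc0' : c = 0 := hzero' 2 (by norm_num)
    rw [hb0', hc0', hS10] at hsplit1
    rw [hb0', hc0', hS20] at hsplit2
    nlinarith [hd, hsplit1, hsplit2]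
  have hS1v : S1 = 3 * (d - 1) - a - b - c := by linarith
  have hS2v : S2 = d ^ 2 - 1 - a ^ 2 - b ^ 2 - c ^ 2 := by linarith
  rw [hS1v, hS2v] at hkey
  -- now the contradiction
  clear_value a b c S1 S2
  clear hS1def hS2def ha hb hc hsum1 hsum2 hsplit1 hsplit2 hS1n hS2n hS1v hS2v hmono hnonneg hzero h1 h2 hN hrN h3N
  rcases le_or_gt (2 * d) (a + b + 3) with hcase | hcase
  · have p1 : 0 ≤ d * (d - a - b - c) :=
      mul_nonneg (by linarith) (by linarith)
    have p2 : 0 ≤ a * (d - 1 - a) :=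
      mul_nonneg (by linarith) (by linarith)
    have p3 : 0 ≤ b * (d - 1 - b) :=
      mul_nonneg (by linarith) (by linarith)
    have p4 : 0 ≤ c * (a + b + 3 - 2 * d) :=
      mul_nonneg hc0 (by linarith)
    nlinarith [p1, p2, p3, p4, hkey]
  · have p1 : 0 ≤ d * (d - a - b - c) :=
      mul_nonneg (by linarith) (by linarith)
    have p2 : 0 ≤ (a - b) * (d - 1 - a) :=
      mul_nonneg (by linarith) (by linarith)
    have p3 : 0 ≤ (b - c) * (2 * d - a - b - 3) :=
      mul_nonneg (by linarith) (by linarith)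
    nlinarith [p1, p2, p3, hkey]
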